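/- Let f(λ) = det(A − λI) for the m×m matrix A_{ij} = εᵢaᵢδ_{ij} + a_j with aᵢ > 0, εᵢ > 0. Then for each index i, f(εᵢaᵢ) = aᵢ · ∏_{k ≠ i}(ε_k a_k − εᵢaᵢ). -/

import Mathlib

open Matrix BigOperators

lemma det_updateRow_sum_vec {n : Type*} [DecidableEq n] [Fintype n]
    (M : Matrix n n ℝ) (i : n) (s : Finset n) (f : n → n → ℝ) :
    (M.updateRow i (∑ k ∈ s, f k)).det = ∑ k ∈ s, (M.updateRow i (f k)).det := by
  induction s using Finset.induction_on with
  | empty =>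
      rw [Finset.sum_empty, Finset.sum_empty]
      exact Matrix.det_eq_zero_of_row_eq_zero i (fun j => by simp)
  | insert _ _ hk ih => simp [Finset.sum_insert hk, Matrix.det_updateRow_add, ih]

/-- value of the characteristic polynomial f(λ)=det(A−λI) at λ = εᵢaᵢ. -/
theorem stmt2 (m : ℕ) (a ε : Fin m → ℝ)
    (ha : ∀ i, 0 < a i) (hε : ∀ i, 0 < ε i)
    (A : Matrix (Fin m) (Fin m) ℝ)
    (hA : ∀ i j, A i j = (if i = j then ε i * a i else 0) + a j) (i : Fin m) :
    (A - (ε i * a i) • (1 : Matrix (Fin m) (Fin m) ℝ)).det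
      = a i * ∏ k ∈ Finset.univ.erase i, (ε k * a k - ε i * a i) := by
  set c := ε i * a i with hc
  set d : Fin m → ℝ := fun k => ε k * a k - c with hd
  have hdi : d i = 0 := by simp [hd, hc]
  set C : Matrix (Fin m) (Fin m) ℝ := (Matrix.diagonal d).updateRow i a with hC
  set w : Fin m → ℝ := fun j => if j = i then 0 else 1 with hw
  set v : Fin m → ℝ := Pi.single i 1 with hv
  have hcr : ∀ j k, (Matrix.replicateCol Unit w * Matrix.replicateRow Unit v) j k = w j * v k := by
    intro j k; simp [Matrix.mul_apply]
  have hCik : ∀ k, C i k = a k := by intro k; simp [hC]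
  have hB : A - c • (1 : Matrix (Fin m) (Fin m) ℝ)
      = (1 + Matrix.replicateCol Unit w * Matrix.replicateRow Unit v) * C := by
    ext j k
    rw [Matrix.add_mul, Matrix.one_mul]
    have : (Matrix.replicateCol Unit w * Matrix.replicateRow Unit v * C) j k = w j * C i k := by
      rw [Matrix.mul_apply]
      rw [Finset.sum_eq_single i]
      · rw [hcr]; simp [hv]
      · intro b _ hb; rw [hcr]; simp [hv, Pi.single_apply, hb]
      · simp
    rw [Matrix.add_apply, this, hCik]
    simp only [Matrix.sub_apply, Matrix.smul_apply, hA, Matrix.one_apply, smul_eq_mul]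
    by_cases hji : j = i
    · subst hji
      simp only [hC, Matrix.updateRow_self, hw, if_pos rfl, zero_mul, add_zero]
      by_cases hjk : j = k <;> simp [hjk, hc]
    · simp only [hC, Matrix.updateRow_apply, hji, if_neg hji, hw, one_mul]
      by_cases hjk : j = k
      · subst hjk; simp [Matrix.diagonal_apply, hd]; ring
      · simp [Matrix.diagonal_apply, hjk]
  rw [hB, Matrix.det_mul, Matrix.det_one_add_replicateCol_mul_replicateRow]
  have hvw : v ⬝ᵥ w = 0 := by
    simp only [dotProduct, hv, hw, Pi.single_apply]
    exact Finset.sum_eq_zero fun x _ => by split_ifs <;> ring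
  rw [hvw, add_zero, one_mul]
  have ha' : a = ∑ k, fun j => a k * (Pi.single k 1 : Fin m → ℝ) j := by
    ext j
    rw [Finset.sum_apply]
    simp [Pi.single_apply, Finset.sum_ite_eq', mul_comm]
  conv_lhs => rw [hC, ha']
  rw [det_updateRow_sum_vec]
  rw [Finset.sum_eq_single i ?_ (by simp)]
  · have heq : (Matrix.diagonal d).updateRow i (fun j => a i * (Pi.single i 1 : Fin m → ℝ) j)
        = Matrix.diagonal (Function.update d i (a i)) := by
      ext j k
      by_cases hji : j = i
      · subst hji
        rw [Matrix.updateRow_self]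
        by_cases hjk : j = k
        · subst hjk
          simp [Matrix.diagonal_apply_eq, Function.update_self]
        · rw [Matrix.diagonal_apply_ne _ hjk]
          simp [Pi.single_apply, Ne.symm hjk]
      · rw [Matrix.updateRow_ne hji]
        by_cases hjk : j = k
        · subst hjk
          rw [Matrix.diagonal_apply_eq, Matrix.diagonal_apply_eq, Function.update_of_ne hji]
        · rw [Matrix.diagonal_apply_ne _ hjk, Matrix.diagonal_apply_ne _ hjk]
    rw [heq, Matrix.det_diagonal, ← Finset.mul_prod_erase _ _ (Finset.mem_univ i)]
    rw [Function.update_self]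
    congr 1
    exact Finset.prod_congr rfl fun k hk =>
      Function.update_of_ne (Finset.ne_of_mem_erase hk) _ _
  · intro k _ hki
    apply Matrix.det_eq_zero_of_column_eq_zero i
    intro j
    by_cases hji : j = i
    · subst hji
      simp [Matrix.updateRow_self, Pi.single_apply, Ne.symm hki]
    · simp [Matrix.updateRow_apply, hji, Matrix.diagonal_apply, hdi]
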